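/- Let S be a primitive constant-length substitution of length L > 1, ν a fully supported product measure on S^ℕ with invariant state μ_ν, and μ the product measure with the same one-site marginals as μ_ν. If ρ(μ, μ_ν) < ∞, then ρ(𝕊_ν^{∘ℓ} μ, μ_ν) → 0 as ℓ → ∞; more precisely there is a function N(ℓ) → ∞ with ρ(𝕊_ν^{∘ℓ} μ, μ_ν) ≤ ρ(μ, μ_ν)(1/N(ℓ) + 1/L^ℓ). -/

import Mathlib

open MeasureTheory Filter
open scoped ENNReal Classical

def applySub {A S : Type*} (subst : S → A → List A) {N : ℕ}
    (s : Fin N → S) (b : Fin N → A) : List A :=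
  (List.ofFn fun i => subst (s i) (b i)).flatten

def trunc {A : Type*} [Inhabited A] (N : ℕ) (w : List A) : Fin N → A :=
  fun i => w.getD i.1 default

def chainT {A S : Type*} [Inhabited A] (subst : S → A → List A) {N : ℕ} :
    List (Fin N → S) → (Fin N → A) → (Fin N → A)
  | [], b => b
  | s :: rest, b => chainT subst rest (trunc N (applySub subst s b))

def PrimitiveSub {A S : Type*} [Inhabited A] (subst : S → A → List A) : Prop :=
  ∀ N : ℕ, ∃ nN : ℕ, ∀ n ≥ nN, ∀ a b : Fin N → A,
    ∃ ss : List (Fin N → S), ss.length = n ∧ chainT subst ss b = a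

def cyl (A : Type*) {N : ℕ} (a : Fin N → A) : Set (ℕ → A) :=
  {x | ∀ i : Fin N, x i.1 = a i}

/-- The projective distance. -/
noncomputable def projDist {A : Type*} [MeasurableSpace A]
    (μ μ' : Measure (ℕ → A)) : ℝ≥0∞ :=
  ⨆ (N : ℕ) (a : Fin (N + 1) → A),
    ENNReal.ofReal (|Real.log ((μ (cyl A a)).toReal / (μ' (cyl A a)).toReal)| / (N + 1))

/-- The transition matrix M_N(a,b) = ∑_{s(b) ⊒ a} ν[s] for the product measure on S^ℕ
with one-site marginals p. -/
noncomputable def MNp {A S : Type*} [Fintype A] [DecidableEq A] [Fintype S]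
    (subst : S → A → List A) (p : ℕ → S → ℝ) (N : ℕ) :
    Matrix (Fin N → A) (Fin N → A) ℝ :=
  Matrix.of fun a b => ∑ s : Fin N → S,
    if List.ofFn a <+: applySub subst s b then ∏ i : Fin N, p i.1 (s i) else 0

/-- The projective distance between the iterate 𝕊_ν^ℓ μ (whose N-marginal is
(M_N)^ℓ applied to the N-marginal of μ) and the invariant state μ_ν. -/
noncomputable def iterDist {A S : Type*} [Fintype A] [DecidableEq A] [Fintype S]
    [MeasurableSpace A] (subst : S → A → List A) (p : ℕ → S → ℝ)
    (μ μν : Measure (ℕ → A)) (ℓ : ℕ) : ℝ≥0∞ :=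
  ⨆ (N : ℕ) (a : Fin (N + 1) → A),
    ENNReal.ofReal
      (|Real.log (((MNp subst p (N + 1)) ^ ℓ).mulVec
          (fun b => (μ (cyl A b)).toReal) a / (μν (cyl A a)).toReal)| / (N + 1))


/-! ### Nat ceil-division sequence -/

def mSeq (L n : ℕ) : ℕ → ℕ
  | 0 => n
  | ℓ+1 => (mSeq L n ℓ + L - 1) / L

lemma mSeq_succ (L n ℓ : ℕ) : mSeq L n (ℓ+1) = (mSeq L n ℓ + L - 1) / L := rfl

lemma mSeq_pos {L n : ℕ} (hL : 0 < L) (hn : 0 < n) : ∀ ℓ, 0 < mSeq L n ℓ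
  | 0 => hn
  | ℓ+1 => by
      have h := mSeq_pos hL hn ℓ
      have h2 : L ≤ mSeq L n ℓ + L - 1 := by omega
      rw [mSeq_succ]; exact (Nat.one_le_div_iff hL).2 h2

lemma ceil_le {L m : ℕ} (hL : 0 < L) : (m + L - 1) / L ≤ m := by
  rcases Nat.eq_zero_or_pos m with h | h
  · subst h
    have : (0 + L - 1) / L = 0 := Nat.div_eq_of_lt (by omega)
    omega
  · obtain ⟨m', rfl⟩ : ∃ m', m = m' + 1 := ⟨m - 1, by omega⟩
    obtain ⟨l', rfl⟩ : ∃ l', L = l' + 1 := ⟨L - 1, by omega⟩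
    have hmul : (m' + 1) * (l' + 1) = m' * l' + m' + l' + 1 := by ring
    have h1 : m' + 1 + (l' + 1) - 1 ≤ (m' + 1) * (l' + 1) := by omega
    calc (m' + 1 + (l' + 1) - 1) / (l' + 1) ≤ (m' + 1) * (l' + 1) / (l' + 1) :=
          Nat.div_le_div_right h1
      _ = m' + 1 := Nat.mul_div_cancel _ (by omega)

lemma mSeq_le {L n : ℕ} (hL : 0 < L) : ∀ ℓ, mSeq L n ℓ ≤ n
  | 0 => le_rfl
  | ℓ+1 => le_trans (by rw [mSeq_succ]; exact ceil_le hL) (mSeq_le hL ℓ)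

lemma ceil_cover {L m : ℕ} (hL : 0 < L) : m ≤ L * ((m + L - 1) / L) := by
  have h1 := Nat.div_add_mod (m + L - 1) L
  have h2 : (m + L - 1) % L < L := Nat.mod_lt _ hL
  set q := (m + L - 1) / L with hq
  set r := (m + L - 1) % L with hr
  set k := L * q with hk
  omega

lemma mSeq_cover {L n : ℕ} (hL : 0 < L) (ℓ : ℕ) :
    mSeq L n ℓ ≤ L * mSeq L n (ℓ+1) := by
  rw [mSeq_succ]; exact ceil_cover hL

lemma mSeq_decay {L n : ℕ} (hL : 0 < L) : ∀ ℓ, (mSeq L n ℓ - 1) * L ^ ℓ ≤ n - 1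
  | 0 => by
      show (mSeq L n 0 - 1) * L ^ 0 ≤ n - 1
      show (n - 1) * L ^ 0 ≤ n - 1
      simp
  | ℓ+1 => by
      have ih := mSeq_decay (n := n) hL ℓ
      rw [mSeq_succ]
      set m := mSeq L n ℓ with hm
      have h1 := Nat.div_add_mod (m + L - 1) L
      have h2 : (m + L - 1) % L < L := Nat.mod_lt _ hL
      obtain ⟨q, hq⟩ : ∃ q, (m + L - 1) / L = q := ⟨_, rfl⟩
      obtain ⟨r, hr⟩ : ∃ r, (m + L - 1) % L = r := ⟨_, rfl⟩
      rw [hq, hr] at h1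
      rw [hr] at h2
      rw [hq]
      have key : (q - 1) * L ≤ m - 1 := by
        rcases q with _ | q'
        · simp
        · have hL1 : L * (q' + 1) = q' * L + L := by ring
          rw [hL1] at h1
          have he : (q' + 1 - 1) * L = q' * L := by simp
          rw [he]
          omega
      calc (q - 1) * L ^ (ℓ+1) = ((q - 1) * L) * L ^ ℓ := by
            rw [pow_succ]; ring
        _ ≤ (m - 1) * L ^ ℓ := Nat.mul_le_mul_right _ key
        _ ≤ n - 1 := ih

/-! ### List lemmas -/

lemma getD_flatten_uniform {α : Type*} {L : ℕ} (hL : 0 < L) :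
    ∀ (bs : List (List α)), (∀ x ∈ bs, x.length = L) → ∀ (j : ℕ) (d : α),
    bs.flatten.getD j d = (bs.getD (j / L) []).getD (j % L) d
  | [], _, j, d => by simp [List.getD]
  | x :: rest, h, j, d => by
      have hx : x.length = L := h x List.mem_cons_self
      rcases lt_or_ge j L with hj | hj
      · have hdiv : j / L = 0 := Nat.div_eq_of_lt hj
        have hmod : j % L = j := Nat.mod_eq_of_lt hj
        rw [List.flatten_cons, hdiv, hmod, List.getD_cons_zero,
          List.getD_append _ _ _ _ (by omega)]
      · have hdiv : j / L = (j - L) / L + 1 := Nat.div_eq_sub_div hL hj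
        have hmod : j % L = (j - L) % L := Nat.mod_eq_sub_mod hj
        have happ : (x ++ rest.flatten).getD j d = rest.flatten.getD (j - L) d := by
          rw [List.getD_eq_getElem?_getD, List.getD_eq_getElem?_getD,
            List.getElem?_append_right (by omega), hx]
        rw [List.flatten_cons, happ, hdiv, hmod, List.getD_cons_succ,
          getD_flatten_uniform hL rest (fun y hy => h y (List.mem_cons_of_mem _ hy)) (j - L) d]

lemma applySub_length {A S : Type*} {L : ℕ} (subst : S → A → List A)
    (hlen : ∀ σ a, (subst σ a).length = L) {n : ℕ} (s : Fin n → S) (b : Fin n → A) :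
    (applySub subst s b).length = n * L := by
  simp only [applySub, List.length_flatten, List.map_ofFn]
  rw [List.sum_ofFn]
  simp [hlen, Function.comp]

lemma applySub_getD {A S : Type*} [Inhabited A] {L : ℕ} (hL : 0 < L)
    (subst : S → A → List A) (hlen : ∀ σ a, (subst σ a).length = L)
    {n : ℕ} (s : Fin n → S) (b : Fin n → A) (j : ℕ) (hj : j / L < n) (d : A) :
    (applySub subst s b).getD j d
      = (subst (s ⟨j / L, hj⟩) (b ⟨j / L, hj⟩)).getD (j % L) d := by
  rw [applySub, getD_flatten_uniform hL _ (by
    intro x hx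
    rw [List.mem_ofFn] at hx
    obtain ⟨i, rfl⟩ := hx
    exact hlen _ _)]
  congr 1
  have hlt : j / L < (List.ofFn fun i => subst (s i) (b i)).length := by simpa using hj
  rw [List.getD_eq_getElem _ _ hlt, List.getElem_ofFn]

lemma ofFn_prefix_iff {A : Type*} [Inhabited A] {n : ℕ} (w : List A) (hw : n ≤ w.length)
    (c : Fin n → A) : List.ofFn c <+: w ↔ c = trunc n w := by
  constructor
  · rintro ⟨t, rfl⟩
    funext i
    have hi : (i : ℕ) < (List.ofFn c).length := by simpa using i.isLt
    simp only [trunc, List.getD_append _ _ _ _ hi]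
    rw [List.getD_eq_getElem _ _ hi, List.getElem_ofFn]
  · rintro rfl
    have hofn : List.ofFn (trunc n w) = w.take n := by
      apply List.ext_getElem
      · simp [hw]
      · intro i h1 h2
        have hi : i < w.length := lt_of_lt_of_le (by simpa using h1) hw
        simp [List.getElem_ofFn, trunc, List.getD_eq_getElem _ _ hi, List.getElem_take, List.getElem?_eq_getElem hi]
    rw [hofn]
    exact List.take_prefix n w


/-! ### Matrix power structure -/

section Mat

variable {A S : Type*} [Fintype A] [DecidableEq A] [Inhabited A] [Fintype S]
  {L : ℕ} (subst : S → A → List A) (p : ℕ → S → ℝ)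

lemma MNp_apply (n : ℕ) (a b : Fin n → A) :
    MNp subst p n a b = ∑ s : Fin n → S,
      if List.ofFn a <+: applySub subst s b then ∏ i : Fin n, p i.1 (s i) else 0 := rfl

lemma MNp_nonneg (hp : ∀ k σ, 0 ≤ p k σ) (n : ℕ) (a b : Fin n → A) :
    0 ≤ MNp subst p n a b := by
  rw [MNp_apply]
  refine Finset.sum_nonneg fun s _ => ?_
  split
  · exact Finset.prod_nonneg fun i _ => hp _ _
  · exact le_refl 0

lemma MNp_pow_nonneg (hp : ∀ k σ, 0 ≤ p k σ) (n : ℕ) :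
    ∀ (ℓ : ℕ) (a b : Fin n → A), 0 ≤ (MNp subst p n ^ ℓ) a b
  | 0, a, b => by
      rw [pow_zero, Matrix.one_apply]
      split <;> norm_num
  | ℓ+1, a, b => by
      rw [pow_succ, Matrix.mul_apply]
      exact Finset.sum_nonneg fun c _ =>
        mul_nonneg (MNp_pow_nonneg hp n ℓ a c) (MNp_nonneg subst p hp n c b)

lemma n_le_applySub_length (hL : 0 < L) (hlen : ∀ σ a, (subst σ a).length = L)
    {n : ℕ} (s : Fin n → S) (b : Fin n → A) : n ≤ (applySub subst s b).length := by
  rw [applySub_length subst hlen]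
  exact Nat.le_mul_of_pos_right n hL

lemma MNp_pow_succ_apply (hL : 0 < L) (hlen : ∀ σ a, (subst σ a).length = L)
    (n ℓ : ℕ) (a b : Fin n → A) :
    (MNp subst p n ^ (ℓ+1)) a b
      = ∑ s : Fin n → S, (∏ i : Fin n, p i.1 (s i)) *
          (MNp subst p n ^ ℓ) a (trunc n (applySub subst s b)) := by
  rw [pow_succ, Matrix.mul_apply]
  have : ∀ c : Fin n → A, (MNp subst p n ^ ℓ) a c * MNp subst p n c b
      = ∑ s : Fin n → S, if c = trunc n (applySub subst s b) then
          (∏ i : Fin n, p i.1 (s i)) * (MNp subst p n ^ ℓ) a c else 0 := by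
    intro c
    rw [MNp_apply, Finset.mul_sum]
    refine Finset.sum_congr rfl fun s _ => ?_
    by_cases hc : c = trunc n (applySub subst s b)
    · rw [if_pos hc,
        if_pos ((ofFn_prefix_iff _ (n_le_applySub_length subst hL hlen s b) c).2 hc),
        mul_comm]
    · rw [if_neg hc,
        if_neg (fun hpre => hc
          ((ofFn_prefix_iff _ (n_le_applySub_length subst hL hlen s b) c).1 hpre)),
        mul_zero]
  simp_rw [this]
  rw [Finset.sum_comm]
  refine Finset.sum_congr rfl fun s _ => ?_
  rw [Finset.sum_ite_eq' Finset.univ (trunc n (applySub subst s b))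
    (fun c => (∏ i : Fin n, p i.1 (s i)) * (MNp subst p n ^ ℓ) a c)]
  simp

lemma MNp_pow_dep (hL : 0 < L) (hlen : ∀ σ a, (subst σ a).length = L) (n : ℕ) :
    ∀ (ℓ : ℕ) (a b b' : Fin n → A),
      (∀ i : Fin n, (i : ℕ) < mSeq L n ℓ → b i = b' i) →
      (MNp subst p n ^ ℓ) a b = (MNp subst p n ^ ℓ) a b'
  | 0, a, b, b', h => by
      have : b = b' := funext fun i => h i i.isLt
      rw [this]
  | ℓ+1, a, b, b', h => by
      rw [MNp_pow_succ_apply subst p hL hlen n ℓ a b,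
        MNp_pow_succ_apply subst p hL hlen n ℓ a b']
      refine Finset.sum_congr rfl fun s _ => ?_
      congr 1
      refine MNp_pow_dep hL hlen n ℓ a _ _ fun i hi => ?_
      have hidiv : (i : ℕ) / L < n := lt_of_le_of_lt (Nat.div_le_self _ _) i.isLt
      have hkey : (i : ℕ) / L < mSeq L n (ℓ+1) := by
        exact Nat.div_lt_of_lt_mul (lt_of_lt_of_le hi (mSeq_cover (n := n) hL ℓ))
      show trunc n (applySub subst s b) i = trunc n (applySub subst s b') i
      simp only [trunc]
      rw [applySub_getD hL subst hlen s b i.1 hidiv,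
        applySub_getD hL subst hlen s b' i.1 hidiv,
        h ⟨(i : ℕ) / L, hidiv⟩ hkey]

end Mat

/-! ### Measure lemmas -/

section Meas

variable {A : Type*} [MeasurableSpace A] [MeasurableSingletonClass A]

lemma measurable_cyl {n : ℕ} (a : Fin n → A) : MeasurableSet (cyl A a) := by
  have : cyl A a = ⋂ i : Fin n, (fun x : ℕ → A => x i.1) ⁻¹' {a i} := by
    ext x; simp [cyl, Set.mem_iInter]
  rw [this]
  exact MeasurableSet.iInter fun i =>
    (measurable_pi_apply (i : ℕ)) (measurableSet_singleton (a i))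

lemma cyl_disjoint {n : ℕ} {b c : Fin n → A} (h : b ≠ c) :
    Disjoint (cyl A b) (cyl A c) := by
  rw [Set.disjoint_left]
  intro x hb hc
  exact h (funext fun i => (hb i).symm.trans (hc i))

lemma cyl_fiber_decomp [Fintype A] {n m : ℕ} (hm : m ≤ n) (b' : Fin m → A) :
    cyl A b' = ⋃ b ∈ Finset.univ.filter
      (fun b : Fin n → A => (fun i : Fin m => b (Fin.castLE hm i)) = b'), cyl A b := by
  ext x
  simp only [Set.mem_iUnion, Finset.mem_filter, Finset.mem_univ, true_and]
  constructor
  · intro hx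
    refine ⟨fun i => x i.1, funext fun i => ?_, fun i => rfl⟩
    exact hx i
  · rintro ⟨b, hb, hxb⟩
    intro i
    have h2 := hxb (Fin.castLE hm i)
    rw [Fin.coe_castLE] at h2
    rw [h2, ← congrFun hb i]

lemma sum_cyl_fiber (κ : Measure (ℕ → A)) [IsProbabilityMeasure κ]
    [Fintype A] {n m : ℕ} (hm : m ≤ n) (b' : Fin m → A)
    [inst : DecidablePred (fun b : Fin n → A => (fun i : Fin m => b (Fin.castLE hm i)) = b')] :
    ∑ b ∈ Finset.univ.filter
        (fun b : Fin n → A => (fun i : Fin m => b (Fin.castLE hm i)) = b'),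
      (κ (cyl A b)).toReal = (κ (cyl A b')).toReal := by
  classical
  rw [cyl_fiber_decomp hm b', measure_biUnion_finset ?hd fun b _ => measurable_cyl b,
    ENNReal.toReal_sum fun b _ => measure_ne_top κ _]
  case hd => intro b hb c hc hbc; exact cyl_disjoint hbc
  refine Finset.sum_congr ?_ fun _ _ => rfl
  ext b
  simp [Finset.mem_filter]

end Meas

/-! ### Real ratio lemma -/

lemma log_ratio_bound {ι : Type*} [Fintype ι] [Nonempty ι] (W x y : ι → ℝ)
    (hW : ∀ i, 0 ≤ W i) (hx : ∀ i, 0 < x i) (hy : ∀ i, 0 < y i)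
    (hD : 0 < ∑ i, W i * y i) {C : ℝ} (hC : ∀ i, |Real.log (x i / y i)| ≤ C) :
    |Real.log ((∑ i, W i * x i) / (∑ i, W i * y i))| ≤ C := by
  have hub : ∀ i, x i ≤ Real.exp C * y i := by
    intro i
    have h1 : Real.log (x i / y i) ≤ C := le_trans (le_abs_self _) (hC i)
    have h2 : x i / y i ≤ Real.exp C := by
      calc x i / y i = Real.exp (Real.log (x i / y i)) :=
            (Real.exp_log (div_pos (hx i) (hy i))).symm
        _ ≤ Real.exp C := Real.exp_le_exp.2 h1
    calc x i = (x i / y i) * y i := (div_mul_cancel₀ _ (ne_of_gt (hy i))).symm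
      _ ≤ Real.exp C * y i := mul_le_mul_of_nonneg_right h2 (le_of_lt (hy i))
  have hlb : ∀ i, Real.exp (-C) * y i ≤ x i := by
    intro i
    have h1 : -C ≤ Real.log (x i / y i) := neg_le_of_abs_le (hC i)
    have h2 : Real.exp (-C) ≤ x i / y i := by
      calc Real.exp (-C) ≤ Real.exp (Real.log (x i / y i)) := Real.exp_le_exp.2 h1
        _ = x i / y i := Real.exp_log (div_pos (hx i) (hy i))
    calc Real.exp (-C) * y i ≤ (x i / y i) * y i :=
          mul_le_mul_of_nonneg_right h2 (le_of_lt (hy i))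
      _ = x i := div_mul_cancel₀ _ (ne_of_gt (hy i))
  have hT_ub : ∑ i, W i * x i ≤ Real.exp C * ∑ i, W i * y i := by
    rw [Finset.mul_sum]
    refine Finset.sum_le_sum fun i _ => ?_
    calc W i * x i ≤ W i * (Real.exp C * y i) :=
          mul_le_mul_of_nonneg_left (hub i) (hW i)
      _ = Real.exp C * (W i * y i) := by ring
  have hT_lb : Real.exp (-C) * ∑ i, W i * y i ≤ ∑ i, W i * x i := by
    rw [Finset.mul_sum]
    refine Finset.sum_le_sum fun i _ => ?_
    calc Real.exp (-C) * (W i * y i) = W i * (Real.exp (-C) * y i) := by ring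
      _ ≤ W i * x i := mul_le_mul_of_nonneg_left (hlb i) (hW i)
  have hTpos : 0 < ∑ i, W i * x i :=
    lt_of_lt_of_le (mul_pos (Real.exp_pos _) hD) hT_lb
  rw [abs_le]
  constructor
  · have : Real.exp (-C) ≤ (∑ i, W i * x i) / (∑ i, W i * y i) :=
      (le_div_iff₀ hD).2 hT_lb
    calc -C = Real.log (Real.exp (-C)) := (Real.log_exp _).symm
      _ ≤ Real.log ((∑ i, W i * x i) / (∑ i, W i * y i)) :=
          Real.log_le_log (Real.exp_pos _) this
  · have : (∑ i, W i * x i) / (∑ i, W i * y i) ≤ Real.exp C :=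
      (div_le_iff₀ hD).2 (by rw [mul_comm] at hT_ub ⊢; exact hT_ub)
    calc Real.log ((∑ i, W i * x i) / (∑ i, W i * y i)) ≤ Real.log (Real.exp C) :=
          Real.log_le_log (div_pos hTpos hD) this
      _ = C := Real.log_exp _


/-! ### fixed point, projDist bound, one-site helper -/

section Fixed

variable {A S : Type*} [Fintype A] [DecidableEq A] [Inhabited A] [Fintype S]
  [MeasurableSpace A]

lemma MNp_one_fixed (subst : S → A → List A) (p : ℕ → S → ℝ)
    (μν : Measure (ℕ → A)) (n : ℕ)
    (hinv1 : ∀ a : Fin n → A, (μν (cyl A a)).toReal =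
      ∑ s : Fin n → S, ∑ b : Fin n → A, if List.ofFn a <+: applySub subst s b then
        (∏ i : Fin n, p i.1 (s i)) * (μν (cyl A b)).toReal else 0)
    (c : Fin n → A) :
    ∑ b, MNp subst p n c b * (μν (cyl A b)).toReal = (μν (cyl A c)).toReal := by
  rw [hinv1 c]
  calc ∑ b, MNp subst p n c b * (μν (cyl A b)).toReal
      = ∑ b : Fin n → A, ∑ s : Fin n → S,
          if List.ofFn c <+: applySub subst s b then
            (∏ i : Fin n, p i.1 (s i)) * (μν (cyl A b)).toReal else 0 := by
        refine Finset.sum_congr rfl fun b _ => ?_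
        rw [MNp_apply, Finset.sum_mul]
        exact Finset.sum_congr rfl fun s _ => by rw [ite_mul, zero_mul]
    _ = ∑ s : Fin n → S, ∑ b : Fin n → A,
          if List.ofFn c <+: applySub subst s b then
            (∏ i : Fin n, p i.1 (s i)) * (μν (cyl A b)).toReal else 0 :=
        Finset.sum_comm

lemma MNp_pow_fixed (subst : S → A → List A) (p : ℕ → S → ℝ)
    (μν : Measure (ℕ → A)) (n : ℕ)
    (hinv1 : ∀ a : Fin n → A, (μν (cyl A a)).toReal =
      ∑ s : Fin n → S, ∑ b : Fin n → A, if List.ofFn a <+: applySub subst s b then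
        (∏ i : Fin n, p i.1 (s i)) * (μν (cyl A b)).toReal else 0) :
    ∀ (ℓ : ℕ) (a : Fin n → A),
      ∑ b, (MNp subst p n ^ ℓ) a b * (μν (cyl A b)).toReal = (μν (cyl A a)).toReal
  | 0, a => by
      simp only [pow_zero, Matrix.one_apply, ite_mul, one_mul, zero_mul]
      rw [Finset.sum_ite_eq]
      simp
  | ℓ+1, a => by
      calc ∑ b, (MNp subst p n ^ (ℓ+1)) a b * (μν (cyl A b)).toReal
          = ∑ b : Fin n → A, ∑ c : Fin n → A, (MNp subst p n ^ ℓ) a c *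
              (MNp subst p n c b * (μν (cyl A b)).toReal) := by
            refine Finset.sum_congr rfl fun b _ => ?_
            rw [pow_succ, Matrix.mul_apply, Finset.sum_mul]
            exact Finset.sum_congr rfl fun c _ => by rw [mul_assoc]
        _ = ∑ c : Fin n → A, (MNp subst p n ^ ℓ) a c *
              ∑ b : Fin n → A, MNp subst p n c b * (μν (cyl A b)).toReal := by
            rw [Finset.sum_comm]
            exact Finset.sum_congr rfl fun c _ => by rw [Finset.mul_sum]
        _ = ∑ c : Fin n → A, (MNp subst p n ^ ℓ) a c * (μν (cyl A c)).toReal := by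
            exact Finset.sum_congr rfl fun c _ => by
              rw [MNp_one_fixed subst p μν n hinv1 c]
        _ = (μν (cyl A a)).toReal := MNp_pow_fixed subst p μν n hinv1 ℓ a

end Fixed

lemma projDist_bound {A : Type*} [MeasurableSpace A] (μ μ' : Measure (ℕ → A))
    (hfin : projDist μ μ' ≠ ⊤) {m : ℕ} (hm : 0 < m) (b : Fin m → A) :
    |Real.log ((μ (cyl A b)).toReal / (μ' (cyl A b)).toReal)|
      ≤ (m : ℝ) * (projDist μ μ').toReal := by
  obtain ⟨M, rfl⟩ : ∃ M, m = M + 1 := ⟨m - 1, by omega⟩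
  have h1 : ENNReal.ofReal
      (|Real.log ((μ (cyl A b)).toReal / (μ' (cyl A b)).toReal)| / (M + 1))
      ≤ projDist μ μ' := by
    simp only [projDist]
    exact le_iSup₂ (f := fun (N : ℕ) (a : Fin (N+1) → A) => ENNReal.ofReal
      (|Real.log ((μ (cyl A a)).toReal / (μ' (cyl A a)).toReal)| / (N + 1))) M b
  have h2 := (ENNReal.ofReal_le_iff_le_toReal hfin).1 h1
  rw [div_le_iff₀ (by positivity : (0:ℝ) < (M : ℝ) + 1)] at h2
  push_cast
  linarith

lemma mu_eq_of_one {A : Type*} [MeasurableSpace A] (μ μν : Measure (ℕ → A))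
    (hprod : ∀ (N : ℕ) (a : Fin N → A),
      (μ (cyl A a)).toReal = ∏ i : Fin N, (μν {x | x i.1 = a i}).toReal)
    {m : ℕ} (hm : m = 1) (b' : Fin m → A) :
    (μ (cyl A b')).toReal = (μν (cyl A b')).toReal := by
  subst hm
  rw [hprod 1 b', Fin.prod_univ_one]
  have hs : cyl A b' = {x : ℕ → A | x ((0 : Fin 1) : ℕ) = b' 0} := by
    ext x
    simp only [cyl, Set.mem_setOf_eq]
    constructor
    · intro h; exact h 0
    · intro h i; rw [Fin.eq_zero i]; exact h
  rw [hs]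

/-! ### central bound -/

lemma term_bound {A S : Type*} [Fintype A] [DecidableEq A] [Inhabited A] [Nonempty A]
    [MeasurableSpace A] [MeasurableSingletonClass A]
    [Fintype S] [DecidableEq S] [Nonempty S]
    (L : ℕ) (hL : 1 < L)
    (subst : S → A → List A) (hlen : ∀ σ a, (subst σ a).length = L)
    (p : ℕ → S → ℝ) (hp : ∀ n σ, 0 < p n σ)
    (μν : Measure (ℕ → A)) [IsProbabilityMeasure μν]
    (hfs : ∀ (N : ℕ) (a : Fin N → A), 0 < μν (cyl A a))
    (hinv : ∀ (N : ℕ) (a : Fin N → A), (μν (cyl A a)).toReal =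
      ∑ s : Fin N → S, ∑ b : Fin N → A,
        if List.ofFn a <+: applySub subst s b then
          (∏ i : Fin N, p i.1 (s i)) * (μν (cyl A b)).toReal else 0)
    (μ : Measure (ℕ → A)) [IsProbabilityMeasure μ]
    (hprod : ∀ (N : ℕ) (a : Fin N → A),
      (μ (cyl A a)).toReal = ∏ i : Fin N, (μν {x | x i.1 = a i}).toReal)
    (hfin : projDist μ μν ≠ ⊤) (ℓ N : ℕ) (a : Fin (N + 1) → A) :
    ENNReal.ofReal
      (|Real.log (((MNp subst p (N + 1)) ^ ℓ).mulVec
          (fun b => (μ (cyl A b)).toReal) a / (μν (cyl A a)).toReal)| / (N + 1))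
      ≤ projDist μ μν * (((L : ℝ≥0∞) ^ ℓ)⁻¹ + ((L : ℝ≥0∞) ^ ℓ)⁻¹) := by
  classical
  have hL0 : 0 < L := by omega
  have hnpos : 0 < N + 1 := Nat.succ_pos N
  have hm_pos : 0 < mSeq L (N + 1) ℓ := mSeq_pos hL0 hnpos ℓ
  have hm_le : mSeq L (N + 1) ℓ ≤ N + 1 := mSeq_le hL0 ℓ
  set m := mSeq L (N + 1) ℓ with hmdef
  set P := MNp subst p (N + 1) with hPdef
  set res : (Fin (N + 1) → A) → (Fin m → A) := fun b i => b (Fin.castLE hm_le i) with hres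
  set ex : (Fin m → A) → (Fin (N + 1) → A) :=
    fun b' i => if h : (i : ℕ) < m then b' ⟨i.1, h⟩ else default with hex
  have hdep : ∀ b : Fin (N + 1) → A, (P ^ ℓ) a b = (P ^ ℓ) a (ex (res b)) := by
    intro b
    refine MNp_pow_dep subst p hL0 hlen (N + 1) ℓ a b _ fun i hi => ?_
    simp only [hex, hres]
    rw [dif_pos hi]
    exact congrArg b (Fin.ext rfl)
  have hgroup : ∀ v : (Fin (N + 1) → A) → ℝ,
      ∑ b, (P ^ ℓ) a b * v b
        = ∑ b' : Fin m → A, (P ^ ℓ) a (ex b') *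
            ∑ b ∈ Finset.univ.filter (fun b => res b = b'), v b := by
    intro v
    rw [← Finset.sum_fiberwise Finset.univ res (fun b => (P ^ ℓ) a b * v b)]
    refine Finset.sum_congr rfl fun b' _ => ?_
    rw [Finset.mul_sum]
    refine Finset.sum_congr rfl fun b hb => ?_
    have hresb : res b = b' := (Finset.mem_filter.1 hb).2
    rw [hdep b, hresb]
  have hT : (P ^ ℓ).mulVec (fun b => (μ (cyl A b)).toReal) a
      = ∑ b' : Fin m → A, (P ^ ℓ) a (ex b') * (μ (cyl A b')).toReal := by
    show ∑ b, (P ^ ℓ) a b * (μ (cyl A b)).toReal = _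
    rw [hgroup]
    refine Finset.sum_congr rfl fun b' _ => ?_
    rw [hres]
    beta_reduce
    rw [sum_cyl_fiber μ hm_le b']
  have hDfix : ∑ b, (P ^ ℓ) a b * (μν (cyl A b)).toReal = (μν (cyl A a)).toReal :=
    MNp_pow_fixed subst p μν (N + 1) (hinv (N + 1)) ℓ a
  have hD : (μν (cyl A a)).toReal
      = ∑ b' : Fin m → A, (P ^ ℓ) a (ex b') * (μν (cyl A b')).toReal := by
    rw [← hDfix, hgroup]
    refine Finset.sum_congr rfl fun b' _ => ?_
    rw [hres]
    beta_reduce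
    rw [sum_cyl_fiber μν hm_le b']
  have hxpos : ∀ (k : ℕ) (b' : Fin k → A), 0 < (μ (cyl A b')).toReal := by
    intro k b'
    rw [hprod k b']
    refine Finset.prod_pos fun i _ => ?_
    have hsub : cyl A (fun j : Fin ((i : ℕ) + 1) =>
        if (j : ℕ) = (i : ℕ) then b' i else default) ⊆ {x : ℕ → A | x (i : ℕ) = b' i} := by
      intro x hx
      have h0 := hx ⟨(i : ℕ), Nat.lt_succ_self _⟩
      simpa using h0
    have hpos : 0 < μν {x : ℕ → A | x (i : ℕ) = b' i} :=
      lt_of_lt_of_le (hfs _ _) (measure_mono hsub)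
    exact ENNReal.toReal_pos hpos.ne' (measure_ne_top _ _)
  have hypos : ∀ (k : ℕ) (b' : Fin k → A), 0 < (μν (cyl A b')).toReal :=
    fun k b' => ENNReal.toReal_pos (hfs k b').ne' (measure_ne_top _ _)
  have hWnn : ∀ b' : Fin m → A, 0 ≤ (P ^ ℓ) a (ex b') :=
    fun b' => MNp_pow_nonneg subst p (fun k σ => (hp k σ).le) (N + 1) ℓ a (ex b')
  have hDpos : 0 < ∑ b' : Fin m → A, (P ^ ℓ) a (ex b') * (μν (cyl A b')).toReal := by
    rw [← hD]; exact hypos _ a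
  rcases le_or_gt (N + 1) (L ^ ℓ) with hsmall | hbig
  · -- short preimage words have length 1, exact equality
    have hm1 : m = 1 := by
      have hd := mSeq_decay (L := L) (n := N + 1) hL0 ℓ
      rw [← hmdef] at hd
      by_contra hne
      have h2 : 2 ≤ m := by omega
      have h3 : L ^ ℓ ≤ (m - 1) * L ^ ℓ := Nat.le_mul_of_pos_left _ (by omega)
      omega
    have hTD : (P ^ ℓ).mulVec (fun b => (μ (cyl A b)).toReal) a
        = (μν (cyl A a)).toReal := by
      rw [hT, hD]
      exact Finset.sum_congr rfl fun b' _ => by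
        rw [mu_eq_of_one μ μν hprod hm1 b']
    rw [hTD, div_self (hypos _ a).ne', Real.log_one, abs_zero, zero_div,
      ENNReal.ofReal_zero]
    exact zero_le
  · -- general weighted-average bound
    have hρ : 0 ≤ (projDist μ μν).toReal := ENNReal.toReal_nonneg
    have hC : ∀ b' : Fin m → A,
        |Real.log ((μ (cyl A b')).toReal / (μν (cyl A b')).toReal)|
          ≤ (m : ℝ) * (projDist μ μν).toReal :=
      fun b' => projDist_bound μ μν hfin hm_pos b'
    have hlog : |Real.log ((P ^ ℓ).mulVec (fun b => (μ (cyl A b)).toReal) a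
        / (μν (cyl A a)).toReal)| ≤ (m : ℝ) * (projDist μ μν).toReal := by
      rw [hT, hD]
      exact log_ratio_bound _ _ _ hWnn (fun b' => hxpos _ b') (fun b' => hypos _ b')
        hDpos hC
    have hLpow_pos : (0 : ℝ) < (L : ℝ) ^ ℓ := by positivity
    have hN1 : (0 : ℝ) < (N : ℝ) + 1 := by positivity
    have hmR : (m : ℝ) ≤ ((N : ℝ) + 1) / (L : ℝ) ^ ℓ + 1 := by
      have hd := mSeq_decay (L := L) (n := N + 1) hL0 ℓ
      rw [← hmdef] at hd
      have h1 : (m - 1) * L ^ ℓ ≤ N := by omega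
      have h1' := (Nat.cast_le (α := ℝ)).2 h1
      rw [Nat.cast_mul, Nat.cast_sub hm_pos, Nat.cast_pow, Nat.cast_one] at h1'
      have h2 : (m : ℝ) - 1 ≤ ((N : ℝ) + 1) / (L : ℝ) ^ ℓ := by
        rw [le_div_iff₀ hLpow_pos]
        nlinarith
      linarith
    have hb : (L : ℝ) ^ ℓ ≤ (N : ℝ) + 1 := by
      have : (L ^ ℓ : ℕ) ≤ N + 1 := le_of_lt hbig
      exact_mod_cast this
    have hfrac : (m : ℝ) / ((N : ℝ) + 1) ≤ 1 / (L : ℝ) ^ ℓ + 1 / (L : ℝ) ^ ℓ := by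
      calc (m : ℝ) / ((N : ℝ) + 1)
          ≤ (((N : ℝ) + 1) / (L : ℝ) ^ ℓ + 1) / ((N : ℝ) + 1) := by gcongr
        _ = 1 / (L : ℝ) ^ ℓ + 1 / ((N : ℝ) + 1) := by field_simp
        _ ≤ 1 / (L : ℝ) ^ ℓ + 1 / (L : ℝ) ^ ℓ := by gcongr
    have hstep : |Real.log ((P ^ ℓ).mulVec (fun b => (μ (cyl A b)).toReal) a
        / (μν (cyl A a)).toReal)| / ((N : ℝ) + 1)
        ≤ (projDist μ μν).toReal * (1 / (L : ℝ) ^ ℓ + 1 / (L : ℝ) ^ ℓ) := by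
      calc |Real.log ((P ^ ℓ).mulVec (fun b => (μ (cyl A b)).toReal) a
            / (μν (cyl A a)).toReal)| / ((N : ℝ) + 1)
          ≤ ((m : ℝ) * (projDist μ μν).toReal) / ((N : ℝ) + 1) := by gcongr
        _ = (projDist μ μν).toReal * ((m : ℝ) / ((N : ℝ) + 1)) := by ring
        _ ≤ (projDist μ μν).toReal * (1 / (L : ℝ) ^ ℓ + 1 / (L : ℝ) ^ ℓ) :=
            mul_le_mul_of_nonneg_left hfrac hρ
    have hofr : ENNReal.ofReal (1 / (L : ℝ) ^ ℓ) = ((L : ℝ≥0∞) ^ ℓ)⁻¹ := by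
      rw [one_div, ENNReal.ofReal_inv_of_pos hLpow_pos,
        ENNReal.ofReal_pow (by positivity), ENNReal.ofReal_natCast]
    calc ENNReal.ofReal (|Real.log ((P ^ ℓ).mulVec (fun b => (μ (cyl A b)).toReal) a
          / (μν (cyl A a)).toReal)| / (N + 1))
        ≤ ENNReal.ofReal ((projDist μ μν).toReal *
            (1 / (L : ℝ) ^ ℓ + 1 / (L : ℝ) ^ ℓ)) := by
          exact ENNReal.ofReal_le_ofReal hstep
      _ = projDist μ μν * ENNReal.ofReal (1 / (L : ℝ) ^ ℓ + 1 / (L : ℝ) ^ ℓ) := by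
          rw [ENNReal.ofReal_mul hρ, ENNReal.ofReal_toReal hfin]
      _ = projDist μ μν * (((L : ℝ≥0∞) ^ ℓ)⁻¹ + ((L : ℝ≥0∞) ^ ℓ)⁻¹) := by
          rw [ENNReal.ofReal_add (by positivity) (by positivity), hofr]

/-- projective convergence: for a primitive constant-length substitution
of length L > 1 and a fully supported product measure ν on S^ℕ with invariant state μ_ν,
if the product measure μ with the same one-site marginals as μ_ν satisfies
ρ(μ,μ_ν) < ∞, then ρ(𝕊_ν^ℓ μ, μ_ν) → 0; more precisely
ρ(𝕊_ν^ℓ μ, μ_ν) ≤ ρ(μ,μ_ν)(1/N(ℓ) + 1/L^ℓ) for some N(ℓ) → ∞. -/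
theorem stmt10 {A S : Type*} [Fintype A] [DecidableEq A] [Inhabited A] [Nonempty A]
    [MeasurableSpace A] [MeasurableSingletonClass A]
    [Fintype S] [DecidableEq S] [Nonempty S]
    (L : ℕ) (hL : 1 < L)
    (subst : S → A → List A) (hlen : ∀ σ a, (subst σ a).length = L)
    (hprim : PrimitiveSub subst)
    (p : ℕ → S → ℝ) (hp : ∀ n σ, 0 < p n σ) (hp1 : ∀ n, ∑ σ : S, p n σ = 1)
    (μν : Measure (ℕ → A)) [IsProbabilityMeasure μν]
    (hfs : ∀ (N : ℕ) (a : Fin N → A), 0 < μν (cyl A a))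
    (hinv : ∀ (N : ℕ) (a : Fin N → A), (μν (cyl A a)).toReal =
      ∑ s : Fin N → S, ∑ b : Fin N → A,
        if List.ofFn a <+: applySub subst s b then
          (∏ i : Fin N, p i.1 (s i)) * (μν (cyl A b)).toReal else 0)
    (μ : Measure (ℕ → A)) [IsProbabilityMeasure μ]
    (hprod : ∀ (N : ℕ) (a : Fin N → A),
      (μ (cyl A a)).toReal = ∏ i : Fin N, (μν {x | x i.1 = a i}).toReal)
    (hfin : projDist μ μν ≠ ⊤) :
    Tendsto (iterDist subst p μ μν) atTop (nhds 0) ∧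
    ∃ Nf : ℕ → ℕ, Tendsto Nf atTop atTop ∧
      ∀ ℓ : ℕ, iterDist subst p μ μν ℓ ≤
        projDist μ μν * ((Nf ℓ : ℝ≥0∞)⁻¹ + ((L : ℝ≥0∞) ^ ℓ)⁻¹) := by
  refine ⟨?_, ⟨fun ℓ => L ^ ℓ, ?_, ?_⟩⟩
  case refine_3 =>
    intro ℓ
    have hcast : ((L ^ ℓ : ℕ) : ℝ≥0∞) = (L : ℝ≥0∞) ^ ℓ := by push_cast; rfl
    rw [hcast]
    simp only [iterDist]
    exact iSup₂_le fun N a =>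
      term_bound L hL subst hlen p hp μν hfs hinv μ hprod hfin ℓ N a
  case refine_2 =>
    exact tendsto_atTop_mono (fun n => (Nat.lt_pow_self hL : n < L ^ n).le) tendsto_id
  case refine_1 =>
    have hbound : ∀ ℓ, iterDist subst p μ μν ℓ ≤
        projDist μ μν * (((L : ℝ≥0∞) ^ ℓ)⁻¹ + ((L : ℝ≥0∞) ^ ℓ)⁻¹) := by
      intro ℓ
      simp only [iterDist]
      exact iSup₂_le fun N a =>
        term_bound L hL subst hlen p hp μν hfs hinv μ hprod hfin ℓ N a
    have h0 : Tendsto (fun ℓ : ℕ => ((L : ℝ≥0∞)⁻¹) ^ ℓ) atTop (nhds 0) :=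
      ENNReal.tendsto_pow_atTop_nhds_zero_of_lt_one
        (ENNReal.inv_lt_one.2 (by exact_mod_cast hL))
    have h2 : Tendsto (fun ℓ : ℕ => ((L : ℝ≥0∞) ^ ℓ)⁻¹ + ((L : ℝ≥0∞) ^ ℓ)⁻¹)
        atTop (nhds 0) := by
      simpa [ENNReal.inv_pow] using h0.add h0
    have h1 : Tendsto (fun ℓ : ℕ => projDist μ μν *
        (((L : ℝ≥0∞) ^ ℓ)⁻¹ + ((L : ℝ≥0∞) ^ ℓ)⁻¹)) atTop (nhds 0) := by
      simpa using ENNReal.Tendsto.const_mul h2 (Or.inr hfin)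
    exact tendsto_of_tendsto_of_tendsto_of_le_of_le tendsto_const_nhds h1
      (fun ℓ => zero_le) hbound
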